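/- Let Y be a proper metric space and let G be a group acting properly discontinuously and cocompactly by isometries on Y, and let C ≥ 0 be a real number. Then there exists a positive integer k₁ with the following property: for every element γ ∈ G of infinite order and every x ∈ Y, there is an integer k with 1 ≤ k ≤ k₁ such that d(γᵏ·x, x) ≥ C. -/

import Mathlib

open Pointwise

/-- The group `G` acts on the metric space `Y` by isometries. -/
def IsIsometricAction (G Y : Type*) [Group G] [MulAction G Y] [MetricSpace Y] : Prop :=
  ∀ g : G, Isometry (fun y : Y => g • y)

/-- The action of `G` on `Y` is properly discontinuous: for every compact `K ⊆ Y`,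
the set of `g ∈ G` with `g • K ∩ K ≠ ∅` is finite. -/
def IsProperlyDiscontinuousAction (G Y : Type*) [Group G] [MulAction G Y]
    [TopologicalSpace Y] : Prop :=
  ∀ K : Set Y, IsCompact K → {g : G | (g • K ∩ K).Nonempty}.Finite

/-- The action of `G` on `Y` is cocompact: there is a compact `K ⊆ Y` with
`⋃ g, g • K = Y`. -/
def IsCocompactAction (G Y : Type*) [Group G] [MulAction G Y] [TopologicalSpace Y] : Prop :=
  ∃ K : Set Y, IsCompact K ∧ ⋃ g : G, g • K = Set.univ

/-- If a group `G` acts properly discontinuously and cocompactly by isometries on a proper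
metric space `Y` and `C ≥ 0`, then there is a positive integer `k₁` such that for every
infinite-order `γ ∈ G` and every `x ∈ Y` there is `1 ≤ k ≤ k₁` with `dist (γᵏ • x) x ≥ C`. -/
theorem infinite_order_moves_far {G Y : Type*} [Group G] [MetricSpace Y]
    [ProperSpace Y] [MulAction G Y]
    (hiso : IsIsometricAction G Y) (hpd : IsProperlyDiscontinuousAction G Y)
    (hcc : IsCocompactAction G Y) (C : ℝ) (hC : 0 ≤ C) :
    ∃ k₁ : ℕ, 0 < k₁ ∧ ∀ γ : G, (∀ n : ℤ, n ≠ 0 → γ ^ n ≠ 1) → ∀ x : Y,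
      ∃ k : ℕ, 1 ≤ k ∧ k ≤ k₁ ∧ C ≤ dist ((γ ^ k) • x) x := by
  classical
  obtain ⟨K, hK, hKcov⟩ := hcc
  set K' := Metric.cthickening C K with hK'def
  have hK'comp : IsCompact K' := hK.cthickening
  set S := (hpd K' hK'comp).toFinset with hSdef
  refine ⟨S.card + 1, Nat.succ_pos _, ?_⟩
  intro γ hγ x
  by_contra hcon
  push_neg at hcon
  have hx : x ∈ ⋃ g : G, g • K := hKcov ▸ Set.mem_univ x
  obtain ⟨g, y, hyK, hxy⟩ : ∃ g : G, ∃ y ∈ K, g • y = x := by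
    simpa [Set.mem_iUnion, Set.mem_smul_set] using hx
  have hdist : ∀ k : ℕ, dist ((g⁻¹ * γ ^ k * g) • y) y = dist ((γ ^ k) • x) x := by
    intro k
    have := (hiso g).dist_eq ((g⁻¹ * γ ^ k * g) • y) y
    simp only [← hxy] at *
    rw [← this]
    congr 1
    simp [smul_smul, mul_assoc]
  have hmem : ∀ k : ℕ, k ≤ S.card + 1 → (g⁻¹ * γ ^ k * g) ∈ S := by
    intro k hk
    have hyK' : (g⁻¹ * γ ^ k * g) • y ∈ K' := by
      rcases Nat.eq_zero_or_pos k with rfl | hkpos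
      · simpa [hK'def] using Metric.self_subset_cthickening K hyK
      · have hlt : dist ((γ ^ k) • x) x < C := hcon k hkpos hk
        exact Metric.mem_cthickening_of_dist_le _ y C K hyK (by rw [hdist k]; exact hlt.le)
    rw [hSdef, Set.Finite.mem_toFinset]
    exact ⟨(g⁻¹ * γ ^ k * g) • y, ⟨y, Metric.self_subset_cthickening K hyK, rfl⟩, hyK'⟩
  have hcard : S.card < (Finset.range (S.card + 2)).card := by
    simp
  obtain ⟨a, ha, b, hb, hab, heq⟩ :=
    Finset.exists_ne_map_eq_of_card_lt_of_maps_to hcard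
      (f := fun k => g⁻¹ * γ ^ k * g)
      (fun k hk => hmem k (Nat.lt_succ_iff.mp (Finset.mem_range.mp hk)))
  have hpow : γ ^ (a : ℤ) = γ ^ (b : ℤ) := by
    have : γ ^ a = γ ^ b := by
      have h1 := mul_left_cancel (a := g⁻¹) (mul_right_cancel heq)
      exact h1
    rw [zpow_natCast, zpow_natCast, this]
  have : γ ^ ((a : ℤ) - b) = 1 := by
    rw [zpow_sub, hpow, mul_inv_cancel]
  exact hγ ((a : ℤ) - b) (sub_ne_zero_of_ne (by exact_mod_cast hab)) this
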